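/- Let $(\Omega, \mathcal{F}, \mathbb{P})$ be a probability space, $p \geq 1$, and $\rho : L^p(\Omega,\mathcal{F},\mathbb{P}) \to \mathbb{R}$ a convex function which is nondecreasing with respect to the $\mathbb{P}$-almost sure partial order (i.e., $X \leq Y$ a.s. implies $\rho(X) \leq \rho(Y)$). Then $\rho$ is continuous with respect to the $L^p$-norm. -/

import Mathlib

open MeasureTheory

theorem stmt_15 {Ω : Type*} [MeasurableSpace Ω] (μ : Measure Ω) [IsProbabilityMeasure μ]
    (p : ENNReal) [Fact (1 ≤ p)] (hp : p ≠ ⊤)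
    (ρ : Lp ℝ p μ → ℝ)
    (hconv : ConvexOn ℝ Set.univ ρ)
    (hmono : ∀ X Y : Lp ℝ p μ, (X : Ω → ℝ) ≤ᵐ[μ] (Y : Ω → ℝ) → ρ X ≤ ρ Y) :
    Continuous ρ := by
  -- it suffices to show ρ is bounded above near 0
  have hbdd : (nhds (0 : Lp ℝ p μ)).IsBoundedUnder (· ≤ ·) ρ := by
    by_contra hb
    -- extract a sequence X n with small norm and large ρ
    have key : ∀ n : ℕ, ∃ X : Lp ℝ p μ, ‖X‖ < (4:ℝ)⁻¹ ^ n ∧ (n : ℝ) < ρ X := by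
      intro n
      have h1 : ¬ ∀ᶠ x in nhds (0 : Lp ℝ p μ), ρ x ≤ (n : ℝ) := fun h => hb ⟨n, h⟩
      rw [Filter.not_eventually] at h1
      have h2 : ∀ᶠ x in nhds (0 : Lp ℝ p μ), ‖x‖ < (4:ℝ)⁻¹ ^ n := by
        have : Metric.ball (0 : Lp ℝ p μ) ((4:ℝ)⁻¹ ^ n) ∈ nhds (0 : Lp ℝ p μ) :=
          Metric.ball_mem_nhds _ (by positivity)
        filter_upwards [this] with x hx
        simpa [dist_eq_norm] using hx
      obtain ⟨x, hx1, hx2⟩ := (h1.and_eventually h2).exists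
      exact ⟨x, hx2, not_le.mp hx1⟩
    choose X hX1 hX2 using key
    set g : ℕ → Lp ℝ p μ := fun n => (2:ℝ) ^ n • |X n| with hg
    have hgnorm : ∀ n, ‖g n‖ ≤ (2:ℝ)⁻¹ ^ n := by
      intro n
      rw [hg]
      simp only [norm_smul, Real.norm_eq_abs, abs_pow, abs_two]
      rw [norm_abs_eq_norm]
      calc (2:ℝ) ^ n * ‖X n‖ ≤ (2:ℝ) ^ n * (4:ℝ)⁻¹ ^ n := by
            gcongr; exact (hX1 n).le
        _ = (2:ℝ)⁻¹ ^ n := by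
            rw [← mul_pow]; norm_num
    have hsum : Summable g :=
      Summable.of_norm_bounded (summable_geometric_of_lt_one (by norm_num) (by norm_num)) hgnorm
    set Z : Lp ℝ p μ := ∑' n, g n with hZ
    have hgnonneg : ∀ n, 0 ≤ g n := by
      intro n
      rw [← Lp.coeFn_le]
      filter_upwards [Lp.coeFn_smul ((2:ℝ) ^ n) (|X n|), Lp.coeFn_abs (X n),
        Lp.coeFn_zero ℝ p μ] with ω e2 e3 e0
      rw [e0, hg]
      simp only [e2, Pi.smul_apply, smul_eq_mul, e3]
      positivity
    have hle : ∀ n, (X n : Ω → ℝ) ≤ᵐ[μ] (((2:ℝ)⁻¹ ^ n • Z : Lp ℝ p μ) : Ω → ℝ) := by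
      intro n
      have hgZ : g n ≤ Z := Summable.le_tsum hsum n fun m _ => hgnonneg m
      have h1 : (g n : Ω → ℝ) ≤ᵐ[μ] (Z : Ω → ℝ) := (Lp.coeFn_le _ _).mpr hgZ
      have h2 := Lp.coeFn_smul ((2:ℝ) ^ n) (|X n|)
      have h3 := Lp.coeFn_abs (X n)
      have h4 := Lp.coeFn_smul ((2:ℝ)⁻¹ ^ n) Z
      rw [hg] at h1
      filter_upwards [h1, h2, h3, h4] with ω e1 e2 e3 e4
      rw [e2] at e1
      simp only [Pi.smul_apply, smul_eq_mul] at e1 e4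
      rw [e3] at e1
      rw [e4]
      have hmul : (2:ℝ)⁻¹ ^ n * (2:ℝ) ^ n = 1 := by rw [← mul_pow]; norm_num
      have hpos : (0:ℝ) ≤ (2:ℝ)⁻¹ ^ n := by positivity
      calc (X n : Ω → ℝ) ω ≤ |(X n : Ω → ℝ) ω| := le_abs_self _
        _ = (2:ℝ)⁻¹ ^ n * ((2:ℝ) ^ n * |(X n : Ω → ℝ) ω|) := by
            rw [← mul_assoc, hmul, one_mul]
        _ ≤ (2:ℝ)⁻¹ ^ n * ((Z : Ω → ℝ) ω) := by
            exact mul_le_mul_of_nonneg_left e1 hpos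
    have hbound : ∀ n : ℕ, (n : ℝ) < |ρ 0| + |ρ Z| := by
      intro n
      have h1 : ρ (X n) ≤ ρ ((2:ℝ)⁻¹ ^ n • Z) := hmono _ _ (hle n)
      have hbpos : (0:ℝ) ≤ (2:ℝ)⁻¹ ^ n := by positivity
      have hble : (2:ℝ)⁻¹ ^ n ≤ 1 := pow_le_one₀ (by norm_num) (by norm_num)
      have h2 := hconv.2 (Set.mem_univ (0 : Lp ℝ p μ)) (Set.mem_univ Z)
        (sub_nonneg.mpr hble) hbpos (by ring)
      rw [smul_zero, zero_add] at h2
      have h3 : (1 - (2:ℝ)⁻¹ ^ n) * ρ 0 + (2:ℝ)⁻¹ ^ n * ρ Z ≤ |ρ 0| + |ρ Z| := by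
        have := abs_nonneg (ρ 0)
        have := abs_nonneg (ρ Z)
        have h4 : (1 - (2:ℝ)⁻¹ ^ n) * ρ 0 ≤ |ρ 0| := by
          calc (1 - (2:ℝ)⁻¹ ^ n) * ρ 0 ≤ (1 - (2:ℝ)⁻¹ ^ n) * |ρ 0| := by
                apply mul_le_mul_of_nonneg_left (le_abs_self _) (by linarith)
            _ ≤ 1 * |ρ 0| := by gcongr <;> linarith
            _ = |ρ 0| := one_mul _
        have h5 : (2:ℝ)⁻¹ ^ n * ρ Z ≤ |ρ Z| := by
          calc (2:ℝ)⁻¹ ^ n * ρ Z ≤ (2:ℝ)⁻¹ ^ n * |ρ Z| :=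
                mul_le_mul_of_nonneg_left (le_abs_self _) hbpos
            _ ≤ 1 * |ρ Z| := by gcongr
            _ = |ρ Z| := one_mul _
        linarith
      calc (n : ℝ) < ρ (X n) := hX2 n
        _ ≤ |ρ 0| + |ρ Z| := h1.trans (h2.trans h3)
    obtain ⟨n, hn⟩ := exists_nat_gt (|ρ 0| + |ρ Z|)
    exact absurd (hbound n) (by linarith)
  have h := (hconv.continuousOn_tfae isOpen_univ ⟨0, Set.mem_univ 0⟩).out 3 1
  exact continuousOn_univ.mp (h.mp ⟨0, Set.mem_univ 0, hbdd⟩)
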